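/- Parametrization solves the trivial functional fixed-point equations: let X', X, Y', Y, Z₀', Z₀ be six pairwise distinct complex numbers, ε = (−1)^N, and set U₁ = −ε(Y−Z₀')/(Y−Z₀), U₂ = −ε(X−Z₀')/(X−Z₀), U₃ = −ε(X−Y')/(X−Y), W₁ = ε(Y'−Z₀)/(Y−Z₀), W₂ = ε(X'−Z₀)/(X−Z₀), W₃ = ε(X'−Y)/(X−Y), K₁ = −[Y',Y;Z₀',Z₀], K₂ = −[X',X;Z₀',Z₀], K₃ = −[X',X;Y',Y]. Then these satisfy the fixed-point equations of the functional map: (K₂U₂−K₁U₁)W₂ = (K₁U₁+U₂)K₃W₃, (W₁−K₃U₃)W₃ = (W₁+U₃)W₂, and (U₁−U₂)U₃ = (K₁U₁+U₂)W₁. -/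

import Mathlib

set_option maxHeartbeats 2000000


/-- The cross-ratio `[A,B;C,D] = (A-C)(B-D)/((A-D)(B-C))`. -/
noncomputable def crossRatio (A B C D : ℂ) : ℂ :=
  (A - C) * (B - D) / ((A - D) * (B - C))

/-- The cross-ratio parametrization solves the fixed-point equations of the
functional map `R^{(f)}` (trivial classical dynamics). -/
theorem crossRatio_solves_fixed_point (N : ℕ) (X' X Y' Y Z₀' Z₀ : ℂ)
    (h₁ : X' ≠ X) (h₂ : X' ≠ Y') (h₃ : X' ≠ Y) (h₄ : X' ≠ Z₀') (h₅ : X' ≠ Z₀)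
    (h₆ : X ≠ Y') (h₇ : X ≠ Y) (h₈ : X ≠ Z₀') (h₉ : X ≠ Z₀)
    (h₁₀ : Y' ≠ Y) (h₁₁ : Y' ≠ Z₀') (h₁₂ : Y' ≠ Z₀)
    (h₁₃ : Y ≠ Z₀') (h₁₄ : Y ≠ Z₀) (h₁₅ : Z₀' ≠ Z₀)
    (ε : ℂ) (hε : ε = (-1 : ℂ) ^ N)
    (U₁ U₂ U₃ W₁ W₂ W₃ K₁ K₂ K₃ : ℂ)
    (hU₁ : U₁ = -ε * ((Y - Z₀') / (Y - Z₀)))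
    (hU₂ : U₂ = -ε * ((X - Z₀') / (X - Z₀)))
    (hU₃ : U₃ = -ε * ((X - Y') / (X - Y)))
    (hW₁ : W₁ = ε * ((Y' - Z₀) / (Y - Z₀)))
    (hW₂ : W₂ = ε * ((X' - Z₀) / (X - Z₀)))
    (hW₃ : W₃ = ε * ((X' - Y) / (X - Y)))
    (hK₁ : K₁ = -crossRatio Y' Y Z₀' Z₀)
    (hK₂ : K₂ = -crossRatio X' X Z₀' Z₀)
    (hK₃ : K₃ = -crossRatio X' X Y' Y) :
    (K₂ * U₂ - K₁ * U₁) * W₂ = (K₁ * U₁ + U₂) * K₃ * W₃ ∧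
      (W₁ - K₃ * U₃) * W₃ = (W₁ + U₃) * W₂ ∧
      (U₁ - U₂) * U₃ = (K₁ * U₁ + U₂) * W₁ := by
  have hε' : ε = 1 ∨ ε = -1 := by
    rw [hε]; rcases Nat.even_or_odd N with h | h
    · left; exact h.neg_one_pow
    · right; exact h.neg_one_pow
  have d1 : X' - X ≠ 0 := sub_ne_zero.mpr h₁
  have d2 : X' - Y' ≠ 0 := sub_ne_zero.mpr h₂
  have d3 : X' - Y ≠ 0 := sub_ne_zero.mpr h₃
  have d4 : X' - Z₀' ≠ 0 := sub_ne_zero.mpr h₄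
  have d5 : X' - Z₀ ≠ 0 := sub_ne_zero.mpr h₅
  have d6 : X - Y' ≠ 0 := sub_ne_zero.mpr h₆
  have d7 : X - Y ≠ 0 := sub_ne_zero.mpr h₇
  have d8 : X - Z₀' ≠ 0 := sub_ne_zero.mpr h₈
  have d9 : X - Z₀ ≠ 0 := sub_ne_zero.mpr h₉
  have d10 : Y' - Y ≠ 0 := sub_ne_zero.mpr h₁₀
  have d11 : Y' - Z₀' ≠ 0 := sub_ne_zero.mpr h₁₁
  have d12 : Y' - Z₀ ≠ 0 := sub_ne_zero.mpr h₁₂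
  have d13 : Y - Z₀' ≠ 0 := sub_ne_zero.mpr h₁₃
  have d14 : Y - Z₀ ≠ 0 := sub_ne_zero.mpr h₁₄
  have d15 : Z₀' - Z₀ ≠ 0 := sub_ne_zero.mpr h₁₅
  have hA : K₁ * U₁ = ε * ((Y' - Z₀') / (Y' - Z₀)) := by
    rw [hK₁, hU₁]; unfold crossRatio; field_simp
  have hB : K₂ * U₂ = ε * ((X' - Z₀') / (X' - Z₀)) := by
    rw [hK₂, hU₂]; unfold crossRatio; field_simp
  have hC : K₃ * U₃ = ε * ((X' - Y') / (X' - Y)) := by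
    rw [hK₃, hU₃]; unfold crossRatio; field_simp
  have hD : K₃ * W₃ = -ε * ((X' - Y') / (X - Y')) := by
    rw [hK₃, hW₃]; unfold crossRatio; field_simp
  refine ⟨?_, ?_, ?_⟩
  · rw [mul_assoc (K₁ * U₁ + U₂), hD, hA, hB, hU₂, hW₂]
    rcases hε' with h | h <;> subst h <;> field_simp <;> ring
  · rw [hC, hW₁, hU₃, hW₂, hW₃]
    rcases hε' with h | h <;> subst h <;> field_simp <;> ring
  · rw [hA, hU₁, hU₂, hU₃, hW₁]
    rcases hε' with h | h <;> subst h <;> field_simp <;> ring
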